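/- Let δ₁, δ₂, δ₃, δ₄ be four pairwise distinct lines through the origin in ℝ². There exists a lattice Λ ⊂ ℝ² intersecting each δᵢ nontrivially if and only if the cross-ratio of the four corresponding points of ℝP¹ is rational. -/

import Mathlib

/-- Cross-ratio of four points of ℝP¹ given by representatives in ℝ² \ {0}. -/
noncomputable def crossRatio (P₁ P₂ P₃ P₄ : ℝ × ℝ) : ℝ :=
  ((P₁.1 * P₃.2 - P₁.2 * P₃.1) * (P₂.1 * P₄.2 - P₂.2 * P₄.1)) /
  ((P₁.1 * P₄.2 - P₁.2 * P₄.1) * (P₂.1 * P₃.2 - P₂.2 * P₃.1))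

lemma pair_indep_of_det (u w : ℝ × ℝ) (h : u.1 * w.2 - u.2 * w.1 ≠ 0) :
    LinearIndependent ℝ ![u, w] := by
  rw [LinearIndependent.pair_iff]
  intro s t hst
  have h1 : s * u.1 + t * w.1 = 0 := by
    have := congrArg Prod.fst hst; simpa [smul_eq_mul] using this
  have h2 : s * u.2 + t * w.2 = 0 := by
    have := congrArg Prod.snd hst; simpa [smul_eq_mul] using this
  have hs : s * (u.1 * w.2 - u.2 * w.1) = 0 := by linear_combination w.2 * h1 - w.1 * h2
  have hs0 : s = 0 := by rcases mul_eq_zero.1 hs with h' | h'; exact h'; exact absurd h' h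
  refine ⟨hs0, ?_⟩
  subst hs0
  simp only [zero_mul, zero_add] at h1 h2
  by_contra ht
  rcases mul_eq_zero.1 h1 with h' | h'; · exact ht h'
  rcases mul_eq_zero.1 h2 with h'' | h''; · exact ht h''
  exact h (by rw [h', h'']; ring)

theorem stmt_2 (v : Fin 4 → ℝ × ℝ) (hne : ∀ i, v i ≠ 0)
    (hdist : ∀ i j, i ≠ j → (v i).1 * (v j).2 - (v i).2 * (v j).1 ≠ 0) :
    (∃ b : Module.Basis (Fin 2) ℝ (ℝ × ℝ), ∀ i, ∃ w : ℝ × ℝ,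
        w ∈ Submodule.span ℤ (Set.range b) ∧ w ≠ 0 ∧
        w ∈ Submodule.span ℝ {v i}) ↔
    (∃ q : ℚ, crossRatio (v 0) (v 1) (v 2) (v 3) = (q : ℝ)) := by
  constructor
  · rintro ⟨b, hB⟩
    choose w hw1 hw2 hw3 using hB
    have hr : Set.range ⇑b = {b 0, b 1} := by
      ext x
      constructor
      · rintro ⟨i, rfl⟩; fin_cases i <;> simp
      · rintro (rfl | rfl)
        · exact ⟨0, rfl⟩
        · exact ⟨1, rfl⟩
    have hmn' : ∀ i, ∃ m n : ℤ, m • b 0 + n • b 1 = w i := by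
      intro i
      exact Submodule.mem_span_pair.1 (hr ▸ hw1 i)
    choose m n hmn using hmn'
    have hmnR : ∀ i, ((m i : ℝ)) • b 0 + ((n i : ℝ)) • b 1 = w i := by
      intro i
      rw [Int.cast_smul_eq_zsmul, Int.cast_smul_eq_zsmul]
      exact hmn i
    have ht' : ∀ i, ∃ t : ℝ, w i = t • v i := by
      intro i
      rcases Submodule.mem_span_singleton.1 (hw3 i) with ⟨t, ht⟩
      exact ⟨t, ht.symm⟩
    choose t ht using ht'
    have htne : ∀ i, t i ≠ 0 := by
      intro i h
      exact hw2 i (by rw [ht i, h, zero_smul])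
    have hv : ∀ i, v i = (t i)⁻¹ • w i := by
      intro i
      rw [ht i, inv_smul_smul₀ (htne i)]
    have hdij : ∀ i j, (v i).1 * (v j).2 - (v i).2 * (v j).1
        = (t i)⁻¹ * ((t j)⁻¹ * (((m i : ℝ) * (n j : ℝ) - (n i : ℝ) * (m j : ℝ)) *
          ((b 0).1 * (b 1).2 - (b 0).2 * (b 1).1))) := by
      intro i j
      rw [hv i, hv j, ← hmnR i, ← hmnR j]
      simp only [Prod.smul_fst, Prod.smul_snd, Prod.fst_add, Prod.snd_add, smul_eq_mul]
      ring
    have hZ : ∀ i j, i ≠ j → (m i : ℝ) * (n j : ℝ) - (n i : ℝ) * (m j : ℝ) ≠ 0 := by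
      intro i j hij h
      exact hdist i j hij (by rw [hdij i j, h]; ring)
    refine ⟨((m 0 * n 2 - n 0 * m 2 : ℤ) : ℚ) * ((m 1 * n 3 - n 1 * m 3 : ℤ) : ℚ) /
      (((m 0 * n 3 - n 0 * m 3 : ℤ) : ℚ) * ((m 1 * n 2 - n 1 * m 2 : ℤ) : ℚ)), ?_⟩
    unfold crossRatio
    rw [hdij 0 2, hdij 1 3, hdij 0 3, hdij 1 2]
    have hden1 : ((t 0)⁻¹ * ((t 3)⁻¹ * (((m 0 : ℝ) * (n 3 : ℝ) - (n 0 : ℝ) * (m 3 : ℝ)) *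
          ((b 0).1 * (b 1).2 - (b 0).2 * (b 1).1)))) *
        ((t 1)⁻¹ * ((t 2)⁻¹ * (((m 1 : ℝ) * (n 2 : ℝ) - (n 1 : ℝ) * (m 2 : ℝ)) *
          ((b 0).1 * (b 1).2 - (b 0).2 * (b 1).1)))) ≠ 0 := by
      rw [← hdij 0 3, ← hdij 1 2]
      exact mul_ne_zero (hdist 0 3 (by decide)) (hdist 1 2 (by decide))
    have h03 := hZ 0 3 (by decide)
    have h12 := hZ 1 2 (by decide)
    push_cast
    rw [div_eq_div_iff hden1 (mul_ne_zero h03 h12)]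
    ring
  · rintro ⟨q, hq⟩
    have hd01 : (v 0).1 * (v 1).2 - (v 0).2 * (v 1).1 ≠ 0 := hdist 0 1 (by decide)
    have hd21 : (v 2).1 * (v 1).2 - (v 2).2 * (v 1).1 ≠ 0 := hdist 2 1 (by decide)
    have hd02 : (v 0).1 * (v 2).2 - (v 0).2 * (v 2).1 ≠ 0 := hdist 0 2 (by decide)
    have hd31 : (v 3).1 * (v 1).2 - (v 3).2 * (v 1).1 ≠ 0 := hdist 3 1 (by decide)
    have hd03 : (v 0).1 * (v 3).2 - (v 0).2 * (v 3).1 ≠ 0 := hdist 0 3 (by decide)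
    have hd12 : (v 1).1 * (v 2).2 - (v 1).2 * (v 2).1 ≠ 0 := hdist 1 2 (by decide)
    obtain ⟨α2, hα2def⟩ : ∃ a : ℝ, a = ((v 2).1 * (v 1).2 - (v 2).2 * (v 1).1) /
      ((v 0).1 * (v 1).2 - (v 0).2 * (v 1).1) := ⟨_, rfl⟩
    obtain ⟨β2, hβ2def⟩ : ∃ a : ℝ, a = ((v 0).1 * (v 2).2 - (v 0).2 * (v 2).1) /
      ((v 0).1 * (v 1).2 - (v 0).2 * (v 1).1) := ⟨_, rfl⟩
    obtain ⟨α3, hα3def⟩ : ∃ a : ℝ, a = ((v 3).1 * (v 1).2 - (v 3).2 * (v 1).1) /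
      ((v 0).1 * (v 1).2 - (v 0).2 * (v 1).1) := ⟨_, rfl⟩
    obtain ⟨β3, hβ3def⟩ : ∃ a : ℝ, a = ((v 0).1 * (v 3).2 - (v 0).2 * (v 3).1) /
      ((v 0).1 * (v 1).2 - (v 0).2 * (v 1).1) := ⟨_, rfl⟩
    have hα2 : α2 ≠ 0 := by rw [hα2def]; exact div_ne_zero hd21 hd01
    have hβ2 : β2 ≠ 0 := by rw [hβ2def]; exact div_ne_zero hd02 hd01
    have hα3 : α3 ≠ 0 := by rw [hα3def]; exact div_ne_zero hd31 hd01
    have hβ3 : β3 ≠ 0 := by rw [hβ3def]; exact div_ne_zero hd03 hd01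
    have hv2 : v 2 = α2 • v 0 + β2 • v 1 := by
      rw [hα2def, hβ2def]
      apply Prod.ext <;>
      · simp only [Prod.fst_add, Prod.snd_add, Prod.smul_fst, Prod.smul_snd, smul_eq_mul]
        rw [div_mul_eq_mul_div, div_mul_eq_mul_div, ← add_div, eq_div_iff hd01]
        ring
    have hv3 : v 3 = α3 • v 0 + β3 • v 1 := by
      rw [hα3def, hβ3def]
      apply Prod.ext <;>
      · simp only [Prod.fst_add, Prod.snd_add, Prod.smul_fst, Prod.smul_snd, smul_eq_mul]
        rw [div_mul_eq_mul_div, div_mul_eq_mul_div, ← add_div, eq_div_iff hd01]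
        ring
    have hq' : (q : ℝ) * (α2 * β3) = α3 * β2 := by
      rw [← hq, hα2def, hβ3def, hα3def, hβ2def]
      unfold crossRatio
      simp only [div_mul_div_comm]
      rw [div_eq_div_iff (mul_ne_zero (mul_ne_zero hd03 hd12) (mul_ne_zero hd01 hd01))
        (mul_ne_zero hd01 hd01)]
      ring
    have hindep : LinearIndependent ℝ ![α2 • v 0, β2 • v 1] := by
      apply pair_indep_of_det
      have : (α2 • v 0).1 * (β2 • v 1).2 - (α2 • v 0).2 * (β2 • v 1).1
          = α2 * β2 * ((v 0).1 * (v 1).2 - (v 0).2 * (v 1).1) := by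
        simp only [Prod.smul_fst, Prod.smul_snd, smul_eq_mul]
        ring
      rw [this]
      exact mul_ne_zero (mul_ne_zero hα2 hβ2) hd01
    have hcard : Fintype.card (Fin 2) = Module.finrank ℝ (ℝ × ℝ) := by
      rw [Fintype.card_fin, Module.finrank_prod, Module.finrank_self]
    refine ⟨basisOfLinearIndependentOfCardEqFinrank hindep hcard, ?_⟩
    set b := basisOfLinearIndependentOfCardEqFinrank hindep hcard with hbdef
    have hb : ⇑b = ![α2 • v 0, β2 • v 1] :=
      coe_basisOfLinearIndependentOfCardEqFinrank hindep hcard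
    have hb0mem : α2 • v 0 ∈ Submodule.span ℤ (Set.range ⇑b) :=
      Submodule.subset_span ⟨0, by rw [hb]; rfl⟩
    have hb1mem : β2 • v 1 ∈ Submodule.span ℤ (Set.range ⇑b) :=
      Submodule.subset_span ⟨1, by rw [hb]; rfl⟩
    intro i
    fin_cases i
    · exact ⟨α2 • v 0, hb0mem, smul_ne_zero hα2 (hne 0),
        Submodule.mem_span_singleton.2 ⟨α2, rfl⟩⟩
    · exact ⟨β2 • v 1, hb1mem, smul_ne_zero hβ2 (hne 1),
        Submodule.mem_span_singleton.2 ⟨β2, rfl⟩⟩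
    · refine ⟨α2 • v 0 + β2 • v 1, Submodule.add_mem _ hb0mem hb1mem, ?_, ?_⟩
      · rw [← hv2]; exact hne 2
      · rw [← hv2]; exact Submodule.mem_span_singleton_self _
    · -- i = 3
      have hdenne : (q.den : ℝ) ≠ 0 := by
        exact_mod_cast q.den_nz
      have hnum : (q.num : ℝ) = (q : ℝ) * (q.den : ℝ) := by
        rw [Rat.cast_def]
        field_simp
      obtain ⟨s, hsdef⟩ : ∃ a : ℝ, a = (q.den : ℝ) * β2 / β3 := ⟨_, rfl⟩
      have hs : s ≠ 0 := by
        rw [hsdef]; exact div_ne_zero (mul_ne_zero hdenne hβ2) hβ3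
      have hc1 : (q.num : ℝ) * α2 = s * α3 := by
        rw [hnum, hsdef]
        rw [div_mul_eq_mul_div, eq_div_iff hβ3]
        linear_combination (q.den : ℝ) * hq'
      have hc2 : (q.den : ℝ) * β2 = s * β3 := by
        rw [hsdef]
        field_simp
      have hkey : q.num • (α2 • v 0) + (q.den : ℤ) • (β2 • v 1) = s • v 3 := by
        rw [hv3, ← Int.cast_smul_eq_zsmul ℝ q.num, ← Int.cast_smul_eq_zsmul ℝ (q.den : ℤ)]
        apply Prod.ext
        · simp only [Prod.fst_add, Prod.snd_add, Prod.smul_fst, Prod.smul_snd, smul_eq_mul,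
            Int.cast_natCast]
          linear_combination (v 0).1 * hc1 + (v 1).1 * hc2
        · simp only [Prod.fst_add, Prod.snd_add, Prod.smul_fst, Prod.smul_snd, smul_eq_mul,
            Int.cast_natCast]
          linear_combination (v 0).2 * hc1 + (v 1).2 * hc2
      refine ⟨q.num • (α2 • v 0) + (q.den : ℤ) • (β2 • v 1),
        Submodule.add_mem _ (Submodule.smul_mem _ _ hb0mem) (Submodule.smul_mem _ _ hb1mem),
        ?_, ?_⟩
      · rw [hkey]; exact smul_ne_zero hs (hne 3)
      · rw [hkey]; exact Submodule.mem_span_singleton.2 ⟨s, rfl⟩
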